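/- Let F be any field and k, n ≥ 1. Every matrix F(z) ∈ F(z)^{k×k} of rational functions in z₁,…,zₙ has a Bessmertnyĭ realization: there exists an affine linear matrix pencil A(z) = A₀ + z₁A₁ + ⋯ + zₙAₙ with A_i ∈ F^{m×m} for some m, partitioned as [A11 A12; A21 A22] with A22(z) invertible over F(z), such that F(z) = A11(z) - A12(z) A22(z)⁻¹ A21(z). -/

import Mathlib

open MvPolynomial Matrix

set_option maxHeartbeats 1000000
set_option synthInstance.maxHeartbeats 400000

namespace Bess

variable {F : Type*} [Field F] {n k : ℕ}

/-- Affine-linear elements of the rational function field. -/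
def IsAff (x : FractionRing (MvPolynomial (Fin n) F)) : Prop :=
  ∃ (a₀ : F) (a : Fin n → F),
    x = algebraMap (MvPolynomial (Fin n) F) _ (C a₀) +
      ∑ i, algebraMap (MvPolynomial (Fin n) F)
            (FractionRing (MvPolynomial (Fin n) F)) (X i) *
          algebraMap (MvPolynomial (Fin n) F) _ (C (a i))

/-- Realizability with a flexible inner index type. -/
def Rz (M : Matrix (Fin k) (Fin k) (FractionRing (MvPolynomial (Fin n) F))) : Prop :=
  ∃ (ι : Type) (_ : Fintype ι) (_ : DecidableEq ι)
      (P : Matrix (Fin k ⊕ ι) (Fin k ⊕ ι) (FractionRing (MvPolynomial (Fin n) F))),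
    (∀ p q, IsAff (P p q)) ∧ IsUnit P.toBlocks₂₂ ∧
      P.toBlocks₁₁ - P.toBlocks₁₂ * P.toBlocks₂₂⁻¹ * P.toBlocks₂₁ = M

lemma isAff_algC (a : F) :
    IsAff (algebraMap (MvPolynomial (Fin n) F) (FractionRing (MvPolynomial (Fin n) F)) (C a)) := by
  exact ⟨a, 0, by simp⟩

lemma isAff_zero : IsAff (0 : FractionRing (MvPolynomial (Fin n) F)) := by
  simpa using isAff_algC (0 : F) (n := n)

lemma isAff_one : IsAff (1 : FractionRing (MvPolynomial (Fin n) F)) := by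
  simpa using isAff_algC (1 : F) (n := n)

lemma isAff_neg_one : IsAff (-1 : FractionRing (MvPolynomial (Fin n) F)) := by
  simpa using isAff_algC (-1 : F) (n := n)

lemma isAff_X (i : Fin n) :
    IsAff (algebraMap (MvPolynomial (Fin n) F) (FractionRing (MvPolynomial (Fin n) F)) (X i)) := by
  refine ⟨0, Pi.single i 1, ?_⟩
  rw [Finset.sum_eq_single i]
  · simp
  · intro b _ hb
    simp [Pi.single_eq_of_ne hb]
  · simp

lemma isAff_add {x y : FractionRing (MvPolynomial (Fin n) F)} (hx : IsAff x) (hy : IsAff y) :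
    IsAff (x + y) := by
  obtain ⟨a₀, a, rfl⟩ := hx
  obtain ⟨b₀, b, rfl⟩ := hy
  refine ⟨a₀ + b₀, a + b, ?_⟩
  simp only [Pi.add_apply, C_add,
    map_add (algebraMap (MvPolynomial (Fin n) F) (FractionRing (MvPolynomial (Fin n) F))),
    mul_add, Finset.sum_add_distrib]
  ring

lemma rz_of_blocks {ι : Type} [Fintype ι] [DecidableEq ι]
    {M : Matrix (Fin k) (Fin k) (FractionRing (MvPolynomial (Fin n) F))}
    (A : Matrix (Fin k) (Fin k) (FractionRing (MvPolynomial (Fin n) F)))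
    (B : Matrix (Fin k) ι (FractionRing (MvPolynomial (Fin n) F)))
    (Cm : Matrix ι (Fin k) (FractionRing (MvPolynomial (Fin n) F)))
    (D : Matrix ι ι (FractionRing (MvPolynomial (Fin n) F)))
    (hA : ∀ i j, IsAff (A i j)) (hB : ∀ i j, IsAff (B i j))
    (hC : ∀ i j, IsAff (Cm i j)) (hD : ∀ i j, IsAff (D i j))
    (hU : IsUnit D) (hS : A - B * D⁻¹ * Cm = M) : Rz M := by
  refine ⟨ι, inferInstance, inferInstance, fromBlocks A B Cm D, ?_, ?_, ?_⟩
  · rintro (p | p) (q | q) <;>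
      simp only [fromBlocks_apply₁₁, fromBlocks_apply₁₂, fromBlocks_apply₂₁,
        fromBlocks_apply₂₂] <;> [exact hA p q; exact hB p q; exact hC p q; exact hD p q]
  · rwa [toBlocks_fromBlocks₂₂]
  · rwa [toBlocks_fromBlocks₁₁, toBlocks_fromBlocks₁₂, toBlocks_fromBlocks₂₁,
      toBlocks_fromBlocks₂₂]

/-- A matrix whose entries are all affine is realizable (with trivial inner block). -/
lemma rz_of_aff {M : Matrix (Fin k) (Fin k) (FractionRing (MvPolynomial (Fin n) F))}
    (h : ∀ i j, IsAff (M i j)) : Rz M := by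
  refine rz_of_blocks M (0 : Matrix (Fin k) Empty _) 0 1 h ?_ ?_ ?_ isUnit_one ?_
  · intro i j; exact j.elim
  · intro i j; exact i.elim
  · intro i j; exact j.elim
  · have : (0 : Matrix (Fin k) Empty (FractionRing (MvPolynomial (Fin n) F))) *
        (1 : Matrix Empty Empty (FractionRing (MvPolynomial (Fin n) F)))⁻¹ *
        (0 : Matrix Empty (Fin k) (FractionRing (MvPolynomial (Fin n) F))) = 0 := by
      simp
    rw [this, sub_zero]

lemma Rz.add {M₁ M₂ : Matrix (Fin k) (Fin k) (FractionRing (MvPolynomial (Fin n) F))}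
    (h₁ : Rz M₁) (h₂ : Rz M₂) : Rz (M₁ + M₂) := by
  obtain ⟨ι, _, _, P, hP, hPu, hPs⟩ := h₁
  obtain ⟨κ, _, _, Q, hQ, hQu, hQs⟩ := h₂
  obtain ⟨iP⟩ := hPu.nonempty_invertible
  obtain ⟨iQ⟩ := hQu.nonempty_invertible
  refine rz_of_blocks (P.toBlocks₁₁ + Q.toBlocks₁₁)
    (fromCols P.toBlocks₁₂ Q.toBlocks₁₂) (fromRows P.toBlocks₂₁ Q.toBlocks₂₁)
    (fromBlocks P.toBlocks₂₂ 0 0 Q.toBlocks₂₂) ?_ ?_ ?_ ?_ ?_ ?_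
  · intro i j
    exact isAff_add (hP (Sum.inl i) (Sum.inl j)) (hQ (Sum.inl i) (Sum.inl j))
  · rintro i (j | j)
    · rw [fromCols_apply_inl]; exact hP (Sum.inl i) (Sum.inr j)
    · rw [fromCols_apply_inr]; exact hQ (Sum.inl i) (Sum.inr j)
  · rintro (i | i) j
    · rw [fromRows_apply_inl]; exact hP (Sum.inr i) (Sum.inl j)
    · rw [fromRows_apply_inr]; exact hQ (Sum.inr i) (Sum.inl j)
  · rintro (i | i) (j | j) <;>
      simp only [fromBlocks_apply₁₁, fromBlocks_apply₁₂, fromBlocks_apply₂₁, fromBlocks_apply₂₂,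
        Matrix.zero_apply]
    · exact hP (Sum.inr i) (Sum.inr j)
    · exact isAff_zero
    · exact isAff_zero
    · exact hQ (Sum.inr i) (Sum.inr j)
  · letI := fromBlocksZero₂₁Invertible P.toBlocks₂₂ 0 Q.toBlocks₂₂
    exact isUnit_of_invertible _
  · letI := fromBlocksZero₂₁Invertible P.toBlocks₂₂ 0 Q.toBlocks₂₂
    have hinv : (fromBlocks P.toBlocks₂₂ 0 0 Q.toBlocks₂₂)⁻¹ =
        fromBlocks P.toBlocks₂₂⁻¹ 0 0 Q.toBlocks₂₂⁻¹ := by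
      rw [← invOf_eq_nonsing_inv, invOf_fromBlocks_zero₂₁_eq, invOf_eq_nonsing_inv,
        invOf_eq_nonsing_inv]
      simp
    rw [hinv, fromCols_mul_fromBlocks, fromCols_mul_fromRows]
    simp only [Matrix.mul_zero, Matrix.zero_mul, add_zero, zero_add]
    rw [← hPs, ← hQs]
    abel

lemma isAff_ite {c : Prop} [Decidable c] {x y : FractionRing (MvPolynomial (Fin n) F)}
    (hx : IsAff x) (hy : IsAff y) : IsAff (if c then x else y) := by
  split <;> assumption

lemma Rz.mul {M₁ M₂ : Matrix (Fin k) (Fin k) (FractionRing (MvPolynomial (Fin n) F))}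
    (h₁ : Rz M₁) (h₂ : Rz M₂) : Rz (M₁ * M₂) := by
  obtain ⟨ι, _, _, P, hP, hPu, hPs⟩ := h₁
  obtain ⟨κ, _, _, Q, hQ, hQu, hQs⟩ := h₂
  obtain ⟨iP⟩ := hPu.nonempty_invertible
  obtain ⟨iQ⟩ := hQu.nonempty_invertible
  letI : Invertible (1 : Matrix (Fin k) (Fin k) (FractionRing (MvPolynomial (Fin n) F))) :=
    invertibleOne
  letI : Invertible (-1 : Matrix (Fin k) (Fin k) (FractionRing (MvPolynomial (Fin n) F))) :=
    invertibleNeg 1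
  letI iU : Invertible (fromBlocks (-1 : Matrix (Fin k) (Fin k) (FractionRing (MvPolynomial (Fin n) F))) Q.toBlocks₁₂ 0 Q.toBlocks₂₂) :=
    fromBlocksZero₂₁Invertible _ _ _
  letI iD : Invertible (fromBlocks (fromBlocks (-1 : Matrix (Fin k) (Fin k) (FractionRing (MvPolynomial (Fin n) F))) Q.toBlocks₁₂ 0 Q.toBlocks₂₂) 0
      (fromCols P.toBlocks₂₁ 0) P.toBlocks₂₂) := fromBlocksZero₁₂Invertible _ _ _
  have hUinv : (fromBlocks (-1 : Matrix (Fin k) (Fin k) (FractionRing (MvPolynomial (Fin n) F))) Q.toBlocks₁₂ 0 Q.toBlocks₂₂)⁻¹ =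
      fromBlocks (-1 : Matrix (Fin k) (Fin k) (FractionRing (MvPolynomial (Fin n) F))) (Q.toBlocks₁₂ * Q.toBlocks₂₂⁻¹) 0 Q.toBlocks₂₂⁻¹ := by
    rw [← invOf_eq_nonsing_inv, invOf_fromBlocks_zero₂₁_eq]
    simp [invOf_neg, invOf_one, invOf_eq_nonsing_inv, Matrix.neg_mul, Matrix.one_mul]
  have hDinv : (fromBlocks (fromBlocks (-1 : Matrix (Fin k) (Fin k) (FractionRing (MvPolynomial (Fin n) F))) Q.toBlocks₁₂ 0 Q.toBlocks₂₂) 0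
        (fromCols P.toBlocks₂₁ 0) P.toBlocks₂₂)⁻¹ =
      fromBlocks (fromBlocks (-1 : Matrix (Fin k) (Fin k) (FractionRing (MvPolynomial (Fin n) F))) (Q.toBlocks₁₂ * Q.toBlocks₂₂⁻¹) 0 Q.toBlocks₂₂⁻¹) 0
        (-(P.toBlocks₂₂⁻¹ * fromCols P.toBlocks₂₁ (0 : Matrix ι κ (FractionRing (MvPolynomial (Fin n) F))) *
            fromBlocks (-1 : Matrix (Fin k) (Fin k) (FractionRing (MvPolynomial (Fin n) F))) (Q.toBlocks₁₂ * Q.toBlocks₂₂⁻¹) 0 Q.toBlocks₂₂⁻¹)) P.toBlocks₂₂⁻¹ := by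
    rw [← invOf_eq_nonsing_inv, invOf_fromBlocks_zero₁₂_eq]
    rw [invOf_eq_nonsing_inv, invOf_eq_nonsing_inv, hUinv]
  refine rz_of_blocks 0
    (fromCols (fromCols P.toBlocks₁₁ 0) P.toBlocks₁₂)
    (fromRows (fromRows Q.toBlocks₁₁ Q.toBlocks₂₁) 0)
    (fromBlocks (fromBlocks (-1 : Matrix (Fin k) (Fin k) (FractionRing (MvPolynomial (Fin n) F))) Q.toBlocks₁₂ 0 Q.toBlocks₂₂) 0
      (fromCols P.toBlocks₂₁ 0) P.toBlocks₂₂) ?_ ?_ ?_ ?_ ?_ ?_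
  · intro i j; exact isAff_zero
  · rintro i ((j | j) | j)
    · rw [fromCols_apply_inl, fromCols_apply_inl]; exact hP (Sum.inl i) (Sum.inl j)
    · rw [fromCols_apply_inl, fromCols_apply_inr]; exact isAff_zero
    · rw [fromCols_apply_inr]; exact hP (Sum.inl i) (Sum.inr j)
  · rintro ((i | i) | i) j
    · rw [fromRows_apply_inl, fromRows_apply_inl]; exact hQ (Sum.inl i) (Sum.inl j)
    · rw [fromRows_apply_inl, fromRows_apply_inr]; exact hQ (Sum.inr i) (Sum.inl j)
    · rw [fromRows_apply_inr]; exact isAff_zero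
  · rintro ((i | i) | i) ((j | j) | j) <;>
      simp only [fromBlocks_apply₁₁, fromBlocks_apply₁₂, fromBlocks_apply₂₁,
        fromBlocks_apply₂₂, fromCols_apply_inl, fromCols_apply_inr,
        Matrix.zero_apply, Matrix.neg_apply, Matrix.one_apply]
    · by_cases h : i = j
      · simpa [h] using isAff_neg_one (n := n) (F := F)
      · simpa [h] using isAff_zero (n := n) (F := F)
    · exact hQ (Sum.inl i) (Sum.inr j)
    · exact isAff_zero
    · exact isAff_zero
    · exact hQ (Sum.inr i) (Sum.inr j)
    · exact isAff_zero
    · exact hP (Sum.inr i) (Sum.inl j)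
    · exact isAff_zero
    · exact hP (Sum.inr i) (Sum.inr j)
  · exact isUnit_of_invertible _
  · rw [hDinv]
    simp only [Matrix.mul_assoc]
    simp only [fromCols_mul_fromBlocks, fromBlocks_mul_fromRows, fromCols_mul_fromRows,
      mul_fromCols, fromRows_mul, Matrix.mul_zero, Matrix.zero_mul, Matrix.add_mul,
      Matrix.mul_add, Matrix.neg_mul, Matrix.mul_neg, add_zero, zero_add, neg_neg,
      Matrix.mul_one, Matrix.one_mul, fromCols_neg]
    rw [← hPs, ← hQs]
    simp only [Matrix.sub_mul, Matrix.mul_sub, Matrix.mul_assoc]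
    abel

lemma Rz.inv {M : Matrix (Fin k) (Fin k) (FractionRing (MvPolynomial (Fin n) F))}
    (hM : IsUnit M) (h : Rz M) : Rz M⁻¹ := by
  obtain ⟨ι, _, _, P, hP, hPu, hPs⟩ := h
  obtain ⟨iP⟩ := hPu.nonempty_invertible
  obtain ⟨iM⟩ := hM.nonempty_invertible
  have hM' : P.toBlocks₁₁ - P.toBlocks₁₂ * ⅟P.toBlocks₂₂ * P.toBlocks₂₁ = M := by
    rw [invOf_eq_nonsing_inv]; exact hPs
  letI : Invertible (P.toBlocks₁₁ - P.toBlocks₁₂ * ⅟P.toBlocks₂₂ * P.toBlocks₂₁) :=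
    iM.copy _ hM'
  letI iD : Invertible (fromBlocks P.toBlocks₁₁ P.toBlocks₁₂ P.toBlocks₂₁ P.toBlocks₂₂) :=
    fromBlocks₂₂Invertible _ _ _ _
  refine rz_of_blocks 0
    (fromCols (-1 : Matrix (Fin k) (Fin k) (FractionRing (MvPolynomial (Fin n) F))) 0)
    (fromRows (1 : Matrix (Fin k) (Fin k) (FractionRing (MvPolynomial (Fin n) F))) 0)
    (fromBlocks P.toBlocks₁₁ P.toBlocks₁₂ P.toBlocks₂₁ P.toBlocks₂₂) ?_ ?_ ?_ ?_ ?_ ?_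
  · intro i j; exact isAff_zero
  · rintro i (j | j)
    · rw [fromCols_apply_inl]
      by_cases hij : i = j
      · simpa [Matrix.neg_apply, Matrix.one_apply, hij] using isAff_neg_one (n := n) (F := F)
      · simpa [Matrix.neg_apply, Matrix.one_apply, hij] using isAff_zero (n := n) (F := F)
    · rw [fromCols_apply_inr]; exact isAff_zero
  · rintro (i | i) j
    · rw [fromRows_apply_inl]
      by_cases hij : i = j
      · simpa [Matrix.one_apply, hij] using isAff_one (n := n) (F := F)
      · simpa [Matrix.one_apply, hij] using isAff_zero (n := n) (F := F)
    · rw [fromRows_apply_inr]; exact isAff_zero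
  · rintro (i | i) (j | j) <;>
      simp only [fromBlocks_apply₁₁, fromBlocks_apply₁₂, fromBlocks_apply₂₁, fromBlocks_apply₂₂]
    · exact hP (Sum.inl i) (Sum.inl j)
    · exact hP (Sum.inl i) (Sum.inr j)
    · exact hP (Sum.inr i) (Sum.inl j)
    · exact hP (Sum.inr i) (Sum.inr j)
  · exact isUnit_of_invertible _
  · rw [← invOf_eq_nonsing_inv, invOf_fromBlocks₂₂_eq, fromCols_mul_fromBlocks,
      fromCols_mul_fromRows]
    simp only [Matrix.neg_mul, Matrix.one_mul, Matrix.zero_mul, Matrix.mul_zero, Matrix.mul_one,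
      add_zero, zero_add, zero_sub, neg_neg, Matrix.mul_neg]
    rw [invOf_eq_nonsing_inv, hM']
    simp

lemma rz_zero : Rz (0 : Matrix (Fin k) (Fin k) (FractionRing (MvPolynomial (Fin n) F))) :=
  rz_of_aff fun _ _ => isAff_zero

lemma rz_sum {α : Type*} {s : Finset α}
    {f : α → Matrix (Fin k) (Fin k) (FractionRing (MvPolynomial (Fin n) F))}
    (h : ∀ a ∈ s, Rz (f a)) : Rz (∑ a ∈ s, f a) :=
  Finset.sum_induction f Rz (fun _ _ ha hb => ha.add hb) rz_zero h

lemma rz_poly (p : MvPolynomial (Fin n) F) :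
    Rz ((algebraMap (MvPolynomial (Fin n) F) (FractionRing (MvPolynomial (Fin n) F)) p) •
      (1 : Matrix (Fin k) (Fin k) (FractionRing (MvPolynomial (Fin n) F)))) := by
  induction p using MvPolynomial.induction_on with
  | C a =>
    refine rz_of_aff fun i j => ?_
    simp only [Matrix.smul_apply, Matrix.one_apply, smul_eq_mul, mul_ite, mul_one, mul_zero]
    exact isAff_ite (isAff_algC a) isAff_zero
  | add p q hp hq =>
    rw [map_add, add_smul]
    exact hp.add hq
  | mul_X p i hp =>
    have hX : Rz ((algebraMap (MvPolynomial (Fin n) F)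
        (FractionRing (MvPolynomial (Fin n) F)) (X i)) •
        (1 : Matrix (Fin k) (Fin k) (FractionRing (MvPolynomial (Fin n) F)))) := by
      refine rz_of_aff fun a b => ?_
      simp only [Matrix.smul_apply, Matrix.one_apply, smul_eq_mul, mul_ite, mul_one, mul_zero]
      exact isAff_ite (isAff_X i) isAff_zero
    have hmul := hp.mul hX
    rwa [Matrix.smul_mul, Matrix.mul_smul, Matrix.one_mul, smul_smul, ← map_mul
      (algebraMap (MvPolynomial (Fin n) F) (FractionRing (MvPolynomial (Fin n) F)))] at hmul

lemma rz_std (x : MvPolynomial (Fin n) F) (i j : Fin k) :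
    Rz (Matrix.single i j
      ((algebraMap (MvPolynomial (Fin n) F) (FractionRing (MvPolynomial (Fin n) F))) x)) := by
  have hE : Rz (Matrix.single i j (1 : FractionRing (MvPolynomial (Fin n) F))) := by
    refine rz_of_aff fun a b => ?_
    simp only [Matrix.single, of_apply]
    exact isAff_ite isAff_one isAff_zero
  have hm := (rz_poly (k := k) x).mul hE
  rwa [Matrix.smul_mul, Matrix.one_mul, smul_single, smul_eq_mul, mul_one] at hm

lemma rz_all (M : Matrix (Fin k) (Fin k) (FractionRing (MvPolynomial (Fin n) F))) : Rz M := by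
  obtain ⟨b, hb⟩ := IsLocalization.exist_integer_multiples
    (nonZeroDivisors (MvPolynomial (Fin n) F)) Finset.univ
    (fun p : Fin k × Fin k => M p.1 p.2)
  choose N hN using fun p : Fin k × Fin k => hb p (Finset.mem_univ p)
  have hq0 : (b : MvPolynomial (Fin n) F) ≠ 0 := nonZeroDivisors.ne_zero b.2
  have hcq : algebraMap (MvPolynomial (Fin n) F) (FractionRing (MvPolynomial (Fin n) F))
      (b : MvPolynomial (Fin n) F) ≠ 0 :=
    (map_ne_zero_iff _ (IsFractionRing.injective (MvPolynomial (Fin n) F)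
      (FractionRing (MvPolynomial (Fin n) F)))).mpr hq0
  set cq : FractionRing (MvPolynomial (Fin n) F) :=
    algebraMap (MvPolynomial (Fin n) F) (FractionRing (MvPolynomial (Fin n) F))
      (b : MvPolynomial (Fin n) F) with hcqdef
  have hU : IsUnit (cq • (1 : Matrix (Fin k) (Fin k) (FractionRing (MvPolynomial (Fin n) F)))) := by
    rw [← Algebra.algebraMap_eq_smul_one]
    exact (IsUnit.mk0 _ hcq).map
      (algebraMap (FractionRing (MvPolynomial (Fin n) F))
        (Matrix (Fin k) (Fin k) (FractionRing (MvPolynomial (Fin n) F))))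
  set Nmat : Matrix (Fin k) (Fin k) (MvPolynomial (Fin n) F) :=
    Matrix.of fun i j => N (i, j) with hNmatdef
  have key : (cq • (1 : Matrix (Fin k) (Fin k) (FractionRing (MvPolynomial (Fin n) F)))) * M =
      Nmat.map (algebraMap (MvPolynomial (Fin n) F) (FractionRing (MvPolynomial (Fin n) F))) := by
    ext a c
    rw [Matrix.smul_mul, Matrix.one_mul, Matrix.map_apply, Matrix.smul_apply]
    have h2 : cq • M a c = (b : MvPolynomial (Fin n) F) • M a c := by
      rw [hcqdef, smul_eq_mul, Algebra.smul_def]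
    simp only [hNmatdef, of_apply]
    rw [h2]
    exact (hN (a, c)).symm
  have hdecomp : Nmat.map (algebraMap (MvPolynomial (Fin n) F)
        (FractionRing (MvPolynomial (Fin n) F))) =
      ∑ p : Fin k × Fin k, Matrix.single p.1 p.2
        (algebraMap (MvPolynomial (Fin n) F) (FractionRing (MvPolynomial (Fin n) F)) (N p)) := by
    ext a c
    rw [Matrix.sum_apply, Finset.sum_eq_single (a, c)]
    · simp [Matrix.single, hNmatdef]
    · rintro ⟨p1, p2⟩ _ hne
      simp only [Matrix.single, Matrix.of_apply, ite_eq_right_iff]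
      rintro ⟨rfl, rfl⟩
      exact absurd rfl hne
    · simp
  have hRN : Rz (Nmat.map (algebraMap (MvPolynomial (Fin n) F)
      (FractionRing (MvPolynomial (Fin n) F)))) := by
    rw [hdecomp]
    exact rz_sum fun p _ => rz_std (N p) p.1 p.2
  obtain ⟨iu⟩ := hU.nonempty_invertible
  have hMrepr : M =
      (cq • (1 : Matrix (Fin k) (Fin k) (FractionRing (MvPolynomial (Fin n) F))))⁻¹ *
        Nmat.map (algebraMap (MvPolynomial (Fin n) F)
          (FractionRing (MvPolynomial (Fin n) F))) := by
    rw [← key, Matrix.inv_mul_cancel_left_of_invertible]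
  rw [hMrepr]
  exact ((rz_poly _).inv hU).mul hRN

lemma pencil_of_aff {m : Type*} [Fintype m]
    (P : Matrix m m (FractionRing (MvPolynomial (Fin n) F)))
    (h : ∀ p q, IsAff (P p q)) :
    ∃ (A₀ : Matrix m m F) (A : Fin n → Matrix m m F),
      P = A₀.map (fun x => algebraMap (MvPolynomial (Fin n) F) _ (C x)) +
        ∑ i, algebraMap (MvPolynomial (Fin n) F)
            (FractionRing (MvPolynomial (Fin n) F)) (X i) •
          (A i).map (fun x => algebraMap (MvPolynomial (Fin n) F) _ (C x)) := by
  choose a₀ a ha using h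
  refine ⟨Matrix.of a₀, fun i => Matrix.of (fun p q => a p q i), ?_⟩
  ext p q
  rw [ha p q]
  simp only [Matrix.add_apply, Matrix.map_apply, Matrix.sum_apply, Matrix.smul_apply,
    smul_eq_mul, Matrix.of_apply]

end Bess

/-- every `k×k` matrix of rational functions in `n` variables over any
field `F` has a Bessmertnyĭ realization: it is the Schur complement, with respect to
the `(2,2)`-block, of an affine linear matrix pencil `A₀ + z₁A₁ + ⋯ + zₙAₙ` with
constant coefficient matrices `Aᵢ` over `F` and invertible `(2,2)`-block. -/
theorem stmt19 (F : Type*) [Field F] (n k : ℕ) (hn : 1 ≤ n) (hk : 1 ≤ k)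
    (M : Matrix (Fin k) (Fin k) (FractionRing (MvPolynomial (Fin n) F))) :
    ∃ (s : ℕ) (A₀ : Matrix (Fin k ⊕ Fin s) (Fin k ⊕ Fin s) F)
        (A : Fin n → Matrix (Fin k ⊕ Fin s) (Fin k ⊕ Fin s) F),
      let P : Matrix (Fin k ⊕ Fin s) (Fin k ⊕ Fin s)
          (FractionRing (MvPolynomial (Fin n) F)) :=
        A₀.map (fun x => algebraMap (MvPolynomial (Fin n) F) _ (C x)) +
          ∑ i, algebraMap (MvPolynomial (Fin n) F)
              (FractionRing (MvPolynomial (Fin n) F)) (X i) •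
            (A i).map (fun x => algebraMap (MvPolynomial (Fin n) F) _ (C x))
      IsUnit P.toBlocks₂₂ ∧
        P.toBlocks₁₁ - P.toBlocks₁₂ * P.toBlocks₂₂⁻¹ * P.toBlocks₂₁ = M := by
  obtain ⟨ι, _, _, P, hP, hPu, hPs⟩ := Bess.rz_all M
  set e : ι ≃ Fin (Fintype.card ι) := Fintype.equivFin ι with hedef
  set E : (Fin k ⊕ ι) ≃ (Fin k ⊕ Fin (Fintype.card ι)) :=
    Equiv.sumCongr (Equiv.refl _) e with hEdef
  set P' := P.submatrix E.symm E.symm with hP'def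
  have hb11 : P'.toBlocks₁₁ = P.toBlocks₁₁ := by ext i j; rfl
  have hb12 : P'.toBlocks₁₂ = P.toBlocks₁₂.submatrix id e.symm := by ext i j; rfl
  have hb21 : P'.toBlocks₂₁ = P.toBlocks₂₁.submatrix e.symm id := by ext i j; rfl
  have hb22 : P'.toBlocks₂₂ = P.toBlocks₂₂.submatrix e.symm e.symm := by ext i j; rfl
  have hmul : P.toBlocks₂₂ * P.toBlocks₂₂⁻¹ = 1 :=
    Matrix.mul_nonsing_inv _ ((Matrix.isUnit_iff_isUnit_det _).mp hPu)
  have hinv22 : P'.toBlocks₂₂⁻¹ = P.toBlocks₂₂⁻¹.submatrix e.symm e.symm := by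
    apply Matrix.inv_eq_right_inv
    rw [hb22, Matrix.submatrix_mul_equiv, hmul, Matrix.submatrix_one_equiv]
  have hu' : IsUnit P'.toBlocks₂₂ := by
    refine ⟨⟨P'.toBlocks₂₂, P.toBlocks₂₂⁻¹.submatrix e.symm e.symm, ?_, ?_⟩, rfl⟩
    · rw [hb22, Matrix.submatrix_mul_equiv, hmul, Matrix.submatrix_one_equiv]
    · rw [hb22, Matrix.submatrix_mul_equiv, Matrix.nonsing_inv_mul _
        ((Matrix.isUnit_iff_isUnit_det _).mp hPu), Matrix.submatrix_one_equiv]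
  have hschur : P'.toBlocks₁₁ - P'.toBlocks₁₂ * P'.toBlocks₂₂⁻¹ * P'.toBlocks₂₁ = M := by
    rw [hb11, hb12, hb21, hinv22, Matrix.submatrix_mul_equiv, Matrix.submatrix_mul_equiv]
    rw [Matrix.submatrix_id_id]
    exact hPs
  have hP' : ∀ p q, Bess.IsAff (P' p q) := fun p q => hP _ _
  obtain ⟨A₀, A, hpencil⟩ := Bess.pencil_of_aff P' hP'
  exact ⟨Fintype.card ι, A₀, A, hpencil ▸ hu', hpencil ▸ hschur⟩
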